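/- For every d ≥ 2, there exists a non-empty, bounded, path-connected open set X ⊂ ℝ^d with the following property: for every probability measure ρ on X whose density is bounded above and below by positive constants on X, for every C > 0, q > 0 and p ∈ [1,∞), there exist probability measures μ, ν supported in the closed unit ball of ℝ^d and Brenier potentials φ_μ for (ρ,μ) and φ_ν for (ρ,ν) such that ‖φ_μ − φ_ν‖_{L²(ρ)} > C · W_p(μ,ν)^q. -/

import Mathlib

open MeasureTheory
open scoped NNReal ENNReal

noncomputable section

open Set Metric

namespace NH

abbrev E (d : ℕ) := EuclideanSpace ℝ (Fin d)

def bb (n : ℕ) : ℝ := (4:ℝ)⁻¹ ^ n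
def aa (n : ℕ) : ℝ := (8/3) * (1 - (4:ℝ)⁻¹ ^ n)
def ww (n : ℕ) : ℝ := (2:ℝ)⁻¹ ^ ((n+1)^2) / 2

lemma bb_pos (n : ℕ) : 0 < bb n := by unfold bb; positivity
lemma bb_le_one (n : ℕ) : bb n ≤ 1 := by
  unfold bb; exact pow_le_one₀ (by norm_num) (by norm_num)
lemma bb_succ (n : ℕ) : bb (n+1) = bb n / 4 := by
  simp [bb, pow_succ]; ring
lemma bb_antitone : Antitone bb := fun i j h => by
  unfold bb; exact pow_le_pow_of_le_one (by norm_num) (by norm_num) h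
lemma ww_pos (n : ℕ) : 0 < ww n := by unfold ww; positivity
lemma ww_le_one (n : ℕ) : ww n ≤ 1 := by
  unfold ww
  have : (2:ℝ)⁻¹ ^ ((n+1)^2) ≤ 1 := pow_le_one₀ (by norm_num) (by norm_num)
  linarith
lemma aa_succ (n : ℕ) : aa (n+1) = aa n + 2 * bb n := by
  simp [aa, bb, pow_succ]; ring
lemma aa_nonneg (n : ℕ) : 0 ≤ aa n := by
  have h : (4:ℝ)⁻¹ ^ n ≤ 1 := by simpa [bb] using bb_le_one n
  unfold aa; nlinarith
lemma aa_lt (n : ℕ) : aa n < 8/3 := by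
  have : (0:ℝ) < (4:ℝ)⁻¹ ^ n := by positivity
  unfold aa; nlinarith
lemma aa0 : aa 0 = 0 := by simp [aa]
lemma bb0 : bb 0 = 1 := by simp [bb]
lemma aa_mono : Monotone aa :=
  monotone_nat_of_le_succ fun n => by rw [aa_succ]; linarith [bb_pos n]
lemma mid_mono : Monotone (fun n => aa n + bb n / 2) :=
  monotone_nat_of_le_succ fun n => by
    simp only [aa_succ, bb_succ]; linarith [bb_pos n]
lemma edge_mono : Monotone (fun n => aa n + bb n) :=
  monotone_nat_of_le_succ fun n => by
    simp only [aa_succ, bb_succ]; linarith [bb_pos n]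
lemma aa_add_bb_le (n : ℕ) : aa n + bb n ≤ aa (n+1) := by
  rw [aa_succ]; linarith [bb_pos n]

variable {d : ℕ} [NeZero d]

def box (d : ℕ) [NeZero d] (I J : Set ℝ) : Set (E d) :=
  {x | x 0 ∈ I ∧ ∀ i : Fin d, i ≠ 0 → x i ∈ J}

lemma mem_box_iff_pi (I J : Set ℝ) (x : E d) :
    x ∈ box d I J ↔ ∀ i : Fin d, x i ∈ (if i = 0 then I else J) := by
  constructor
  · rintro ⟨h0, h⟩ i
    by_cases hi : i = 0
    · subst hi; simpa using h0
    · simpa [hi] using h i hi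
  · intro h
    exact ⟨by simpa using h 0, fun i hi => by simpa [hi] using h i⟩

lemma isOpen_box (I J : Set ℝ) (hI : IsOpen I) (hJ : IsOpen J) : IsOpen (box d I J) := by
  have : box d I J = (⋂ (i : Fin d), (fun x : E d => x i) ⁻¹' (if i = 0 then I else J)) := by
    ext x; simpa [mem_iInter] using mem_box_iff_pi I J x
  rw [this]
  refine isOpen_iInter_of_finite fun i => ?_
  have hc : Continuous (fun x : E d => x i) := (EuclideanSpace.proj i).continuous
  exact (by split <;> [exact hI; exact hJ] : IsOpen (if i = 0 then I else J)).preimage hc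

lemma convex_box (I J : Set ℝ) (hI : Convex ℝ I) (hJ : Convex ℝ J) : Convex ℝ (box d I J) := by
  intro x hx y hy s t hs ht hst
  constructor
  · simpa using hI hx.1 hy.1 hs ht hst
  · intro i hi
    simpa using hJ (hx.2 i hi) (hy.2 i hi) hs ht hst

lemma volume_box (I J : Set ℝ) :
    volume (box d I J) = volume I * (volume J) ^ (d - 1) := by
  have hmp := (EuclideanSpace.volume_preserving_symm_measurableEquiv_toLp (Fin d)).symm
  set S : Fin d → Set ℝ := fun i => if i = 0 then I else J with hS
  have hbox : (MeasurableEquiv.toLp 2 (Fin d → ℝ)).symm.symm ⁻¹' (box d I J)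
      = Set.pi univ S := by
    ext x
    simp only [mem_preimage, Set.mem_pi, mem_univ, forall_true_left]
    exact mem_box_iff_pi I J _
  have h2 := hmp.measure_preimage_equiv (box d I J)
  rw [hbox, volume_pi_pi] at h2
  rw [← h2]
  rw [← Finset.mul_prod_erase Finset.univ _ (Finset.mem_univ (0 : Fin d))]
  have : ∀ i ∈ Finset.univ.erase (0 : Fin d), volume (S i) = volume J := by
    intro i hi
    rcases Finset.mem_erase.mp hi with ⟨hne, -⟩
    simp [hS, hne]
  rw [Finset.prod_congr rfl this, Finset.prod_const, Finset.card_erase_of_mem (Finset.mem_univ _)]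
  simp [hS]

def Bulb (d : ℕ) [NeZero d] (n : ℕ) : Set (E d) :=
  box d (Ioo (aa n) (aa n + bb n)) (Ioo (-(bb n / 2)) (bb n / 2))

def Neck (d : ℕ) [NeZero d] (n : ℕ) : Set (E d) :=
  box d (Ioo (aa n + bb n / 2) (aa (n+1) + bb (n+1) / 2)) (Ioo (-(ww n)) (ww n))

def XX (d : ℕ) [NeZero d] : Set (E d) := ⋃ n, Bulb d n ∪ Neck d n

lemma isOpen_XX : IsOpen (XX d) :=
  isOpen_iUnion fun n => ((isOpen_box _ _ isOpen_Ioo isOpen_Ioo).union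
    (isOpen_box _ _ isOpen_Ioo isOpen_Ioo))

/-- the point on the axis with first coordinate t -/
def pt (d : ℕ) [NeZero d] (t : ℝ) : E d := EuclideanSpace.single 0 t

@[simp] lemma pt_zero_coord (t : ℝ) : (pt d t) 0 = t := by
  simp [pt, EuclideanSpace.single_apply]
lemma pt_coord (t : ℝ) (i : Fin d) (hi : i ≠ 0) : (pt d t) i = 0 := by
  simp [pt, EuclideanSpace.single_apply, hi]

lemma pt_mem_box {I J : Set ℝ} (t : ℝ) (ht : t ∈ I) (hJ : (0:ℝ) ∈ J) : pt d t ∈ box d I J := by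
  refine ⟨by simpa using ht, fun i hi => ?_⟩
  rw [pt_coord t i hi]; exact hJ

def oP (d : ℕ) [NeZero d] (n : ℕ) : E d := pt d (aa n + 3/4 * bb n)
def oP' (d : ℕ) [NeZero d] (n : ℕ) : E d := pt d (aa (n+1) + bb (n+1) / 4)

lemma oP_mem_Bulb (n : ℕ) : oP d n ∈ Bulb d n :=
  pt_mem_box _ (by constructor <;> [linarith [bb_pos n]; linarith [bb_pos n]])
    (by constructor <;> [linarith [bb_pos n]; linarith [bb_pos n]])
lemma oP_mem_Neck (n : ℕ) : oP d n ∈ Neck d n :=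
  pt_mem_box _ (by
    constructor
    · linarith [bb_pos n]
    · rw [aa_succ]; linarith [bb_pos n, bb_pos (n+1)])
    (by constructor <;> [linarith [ww_pos n]; linarith [ww_pos n]])
lemma oP'_mem_Bulb (n : ℕ) : oP' d n ∈ Bulb d (n+1) :=
  pt_mem_box _ (by constructor <;> [linarith [bb_pos (n+1)]; linarith [bb_pos (n+1)]])
    (by constructor <;> [linarith [bb_pos (n+1)]; linarith [bb_pos (n+1)]])
lemma oP'_mem_Neck (n : ℕ) : oP' d n ∈ Neck d n :=
  pt_mem_box _ (by
    constructor
    · rw [aa_succ]; linarith [bb_pos n, bb_pos (n+1)]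
    · linarith [bb_pos (n+1)])
    (by constructor <;> [linarith [ww_pos n]; linarith [ww_pos n]])

lemma Bulb_subset (n : ℕ) : Bulb d n ⊆ XX d := fun x hx =>
  mem_iUnion.mpr ⟨n, Or.inl hx⟩
lemma Neck_subset (n : ℕ) : Neck d n ⊆ XX d := fun x hx =>
  mem_iUnion.mpr ⟨n, Or.inr hx⟩

lemma joinedIn_of_convex {s : Set (E d)} (hs : Convex ℝ s) {x y : E d}
    (hx : x ∈ s) (hy : y ∈ s) : JoinedIn s x y :=
  (hs.isPathConnected ⟨x, hx⟩).joinedIn x hx y hy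

lemma convex_Bulb (n : ℕ) : Convex ℝ (Bulb d n) := convex_box _ _ (convex_Ioo _ _) (convex_Ioo _ _)
lemma convex_Neck (n : ℕ) : Convex ℝ (Neck d n) := convex_box _ _ (convex_Ioo _ _) (convex_Ioo _ _)

lemma joined_oP (n : ℕ) : JoinedIn (XX d) (oP d 0) (oP d n) := by
  induction n with
  | zero => exact JoinedIn.refl (Bulb_subset 0 (oP_mem_Bulb 0))
  | succ k ih =>
    exact ih.trans
      (((joinedIn_of_convex (convex_Neck k) (oP_mem_Neck k) (oP'_mem_Neck k)).mono
        (Neck_subset k)).trans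
       ((joinedIn_of_convex (convex_Bulb (k+1)) (oP'_mem_Bulb k) (oP_mem_Bulb (k+1))).mono
        (Bulb_subset (k+1))))

lemma isPathConnected_XX : IsPathConnected (XX d) := by
  refine ⟨oP d 0, Bulb_subset 0 (oP_mem_Bulb 0), ?_⟩
  intro y hy
  rcases mem_iUnion.mp hy with ⟨n, hn⟩
  have base : JoinedIn (XX d) (oP d 0) (oP d n) := joined_oP n
  rcases hn with h | h
  · exact base.trans ((joinedIn_of_convex (convex_Bulb n) (oP_mem_Bulb n) h).mono (Bulb_subset n))
  · exact base.trans ((joinedIn_of_convex (convex_Neck n) (oP_mem_Neck n) h).mono (Neck_subset n))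

lemma XX_coord_bound {x : E d} (hx : x ∈ XX d) :
    (0 < x 0 ∧ x 0 < 3) ∧ ∀ i : Fin d, |x i| ≤ 3 := by
  rcases mem_iUnion.mp hx with ⟨n, hn⟩
  have key : (0 < x 0 ∧ x 0 < 3) ∧ ∀ i : Fin d, i ≠ 0 → |x i| ≤ 3 := by
    rcases hn with ⟨h0, h⟩ | ⟨h0, h⟩
    · refine ⟨⟨by linarith [h0.1, aa_nonneg n], by linarith [h0.2, aa_lt (n+1), aa_add_bb_le n]⟩,
        fun i hi => ?_⟩
      have := h i hi
      rw [abs_le]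
      constructor <;> [linarith [this.1, bb_le_one n]; linarith [this.2, bb_le_one n]]
    · refine ⟨⟨by linarith [h0.1, aa_nonneg n, bb_pos n],
        by linarith [h0.2, aa_lt (n+2), aa_add_bb_le (n+1), bb_pos (n+1), bb_le_one (n+1)]⟩,
        fun i hi => ?_⟩
      have := h i hi
      rw [abs_le]
      constructor <;> [linarith [this.1, ww_le_one n]; linarith [this.2, ww_le_one n]]
  refine ⟨key.1, fun i => ?_⟩
  by_cases hi : i = 0
  · subst hi; rw [abs_le]; constructor <;> linarith [key.1.1, key.1.2]
  · exact key.2 i hi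

lemma isBounded_XX : Bornology.IsBounded (XX d) := by
  refine (Metric.isBounded_iff_subset_closedBall 0).mpr ⟨3 * Real.sqrt d, fun x hx => ?_⟩
  have hb := (XX_coord_bound hx).2
  rw [mem_closedBall, dist_zero_right, EuclideanSpace.norm_eq]
  have h1 : ∑ i, ‖x i‖ ^ 2 ≤ (d : ℝ) * 9 := by
    calc ∑ i, ‖x i‖ ^ 2 ≤ ∑ _i : Fin d, (9:ℝ) := by
          refine Finset.sum_le_sum fun i _ => ?_
          have := hb i
          rw [Real.norm_eq_abs]
          nlinarith [abs_nonneg (x i)]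
      _ = (d : ℝ) * 9 := by simp [Finset.sum_const, mul_comm]
  calc Real.sqrt (∑ i, ‖x i‖ ^ 2) ≤ Real.sqrt ((d:ℝ) * 9) := Real.sqrt_le_sqrt h1
    _ = 3 * Real.sqrt d := by
        rw [show ((d:ℝ) * 9) = 3^2 * d by ring, Real.sqrt_mul (by positivity), Real.sqrt_sq]
        norm_num
lemma nonempty_XX : (XX d).Nonempty := ⟨oP d 0, Bulb_subset 0 (oP_mem_Bulb 0)⟩

/-- slab localization -/
lemma slab_subset (n : ℕ) {x : E d} (hx : x ∈ XX d)
    (h1 : aa n + bb n ≤ x 0) (h2 : x 0 ≤ aa (n+1)) :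
    ∀ i : Fin d, i ≠ 0 → |x i| ≤ ww n := by
  rcases mem_iUnion.mp hx with ⟨k, hk⟩
  rcases hk with ⟨h0, h⟩ | ⟨h0, h⟩
  · exfalso
    rcases le_or_gt k n with hkn | hkn
    · have := edge_mono hkn
      simp only at this
      linarith [h0.2]
    · have : aa (n+1) ≤ aa k := aa_mono hkn
      linarith [h0.1]
  · rcases lt_trichotomy k n with hkn | rfl | hkn
    · exfalso
      have hk1n : k + 1 ≤ n := hkn
      have := mid_mono hk1n
      simp only at this
      linarith [h0.2, bb_pos n]
    · intro i hi
      have := h i hi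
      rw [abs_le]
      exact ⟨le_of_lt (by linarith [this.1]), le_of_lt this.2⟩
    · exfalso
      have : aa (n+1) + bb (n+1) / 2 ≤ aa k + bb k / 2 := mid_mono hkn
      linarith [h0.1, bb_pos (n+1)]



/-! ## tent potentials -/

variable {d : ℕ} [NeZero d] in
lemma coord_abs_le_dist (x y : E d) (i : Fin d) : |x i - y i| ≤ dist x y := by
  rw [EuclideanSpace.dist_eq, ← Real.sqrt_sq_eq_abs]
  apply Real.sqrt_le_sqrt
  have h2 : (x i - y i) ^ 2 = dist (x i) (y i) ^ 2 := by
    rw [Real.dist_eq, sq_abs]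
  rw [h2]
  exact Finset.single_le_sum (f := fun j => dist (x j) (y j) ^ 2)
    (fun j _ => sq_nonneg _) (Finset.mem_univ i)

def tent (d : ℕ) [NeZero d] (β : ℝ) : E d → ℝ := fun x => max (x 0 - β) 0

variable {d : ℕ} [NeZero d]

lemma tent_nonneg (β : ℝ) (x : E d) : 0 ≤ tent d β x := le_max_right _ _

lemma tent_convex (β : ℝ) : ConvexOn ℝ Set.univ (tent d β) := by
  have h1 : ConvexOn ℝ Set.univ (fun x : E d => x 0 - β) := by
    refine ⟨convex_univ, fun x _ y _ s t hs ht hst => le_of_eq ?_⟩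
    show (s • x + t • y) 0 - β = s • (x 0 - β) + t • (y 0 - β)
    have h0 : (s • x + t • y) 0 = s * x 0 + t * y 0 := rfl
    rw [h0]; simp only [smul_eq_mul]; linear_combination β * hst
  have h2 : ConvexOn ℝ Set.univ (fun _ : E d => (0:ℝ)) := convexOn_const 0 convex_univ
  exact h1.sup h2

lemma tent_lipschitz (β : ℝ) : LipschitzWith 1 (tent d β) := by
  refine LipschitzWith.of_dist_le_mul fun x y => ?_
  rw [Real.dist_eq, NNReal.coe_one, one_mul]
  calc |tent d β x - tent d β y| ≤ |(x 0 - β) - (y 0 - β)| := abs_max_sub_max_le_abs _ _ _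
    _ = |x 0 - y 0| := by ring_nf
    _ ≤ dist x y := coord_abs_le_dist x y 0

lemma tent_continuous (β : ℝ) : Continuous (tent d β) :=
  (tent_lipschitz β).continuous

def ee (d : ℕ) [NeZero d] : E d := EuclideanSpace.single 0 (1:ℝ)

lemma norm_ee : ‖ee d‖ = 1 := by simp [ee]

lemma gradient_tent_lt {β : ℝ} {x : E d} (h : x 0 < β) : gradient (tent d β) x = 0 := by
  have hopen : IsOpen {y : E d | y 0 < β} :=
    isOpen_Iio.preimage (EuclideanSpace.proj (0 : Fin d)).continuous
  have hev : tent d β =ᶠ[nhds x] (fun _ => (0:ℝ)) := by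
    filter_upwards [hopen.mem_nhds h] with y hy
    have : y 0 < β := hy
    exact max_eq_right (by linarith : y 0 - β ≤ 0)
  rw [gradient, hev.fderiv_eq, fderiv_fun_const]
  simp

lemma hasGradientAt_linear (c : ℝ) {x : E d} :
    HasGradientAt (fun y : E d => y 0 - c) (ee d) x := by
  have hf : HasFDerivAt (fun y : E d => y 0 - c)
      (EuclideanSpace.proj (0 : Fin d) : E d →L[ℝ] ℝ) x := by
    have h0 : HasFDerivAt (fun y : E d => y 0)
        (EuclideanSpace.proj (0 : Fin d) : E d →L[ℝ] ℝ) x :=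
      (EuclideanSpace.proj (0 : Fin d) : E d →L[ℝ] ℝ).hasFDerivAt
    exact h0.sub_const c
  rw [hasGradientAt_iff_hasFDerivAt]
  refine hf.congr_fderiv ?_
  ext y
  simp [InnerProductSpace.toDual_apply_apply, ee, EuclideanSpace.inner_single_left]

lemma gradient_tent_gt {β : ℝ} {x : E d} (h : β < x 0) : gradient (tent d β) x = ee d := by
  have hopen : IsOpen {y : E d | β < y 0} :=
    isOpen_Ioi.preimage (EuclideanSpace.proj (0 : Fin d)).continuous
  have hev : tent d β =ᶠ[nhds x] (fun y => y 0 - β) := by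
    filter_upwards [hopen.mem_nhds h] with y hy
    have : β < y 0 := hy
    exact max_eq_left (by linarith : (0:ℝ) ≤ y 0 - β)
  have h2 : HasFDerivAt (tent d β) (InnerProductSpace.toDual ℝ (E d) (ee d)) x :=
    (hasGradientAt_linear β).hasFDerivAt.congr_of_eventuallyEq hev
  simpa using h2.hasGradientAt.gradient

lemma gradient_norm_eq (f : E d → ℝ) (x : E d) : ‖gradient f x‖ = ‖fderiv ℝ f x‖ := by
  rw [gradient]
  exact LinearIsometryEquiv.norm_map _ _

lemma gradient_tent_norm_le (β : ℝ) (x : E d) : ‖gradient (tent d β) x‖ ≤ 1 := by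
  rw [gradient_norm_eq]
  simpa using norm_fderiv_le_of_lipschitz ℝ (tent_lipschitz β (d := d))

lemma measurable_gradient' (f : E d → ℝ) : Measurable (fun x => gradient f x) := by
  have : Measurable (fderiv ℝ f) := measurable_fderiv ℝ f
  exact ((InnerProductSpace.toDual ℝ (E d)).symm.toLinearIsometry.continuous.measurable).comp this

lemma gradient_sub_const (f : E d → ℝ) (c : ℝ) (x : E d) :
    gradient (fun y => f y - c) x = gradient f x := by
  rw [gradient, gradient, fderiv_sub_const]

/-! ## tent difference pointwise facts -/

lemma tent_diff_left {α β : ℝ} (hab : α ≤ β) {x : E d} (h : x 0 ≤ α) :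
    tent d β x - tent d α x = 0 := by
  unfold tent
  rw [max_eq_right (by linarith), max_eq_right (by linarith)]
  ring

lemma tent_diff_right {α β : ℝ} (hab : α ≤ β) {x : E d} (h : β ≤ x 0) :
    tent d β x - tent d α x = α - β := by
  unfold tent
  rw [max_eq_left (by linarith), max_eq_left (by linarith)]
  ring

lemma tent_diff_bounds {α β : ℝ} (hab : α ≤ β) (x : E d) :
    α - β ≤ tent d β x - tent d α x ∧ tent d β x - tent d α x ≤ 0 := by
  unfold tent
  rcases le_total (x 0) α with h | h
  · rw [max_eq_right (by linarith), max_eq_right (by linarith)]; constructor <;> linarith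
  rcases le_total (x 0) β with h2 | h2
  · rw [max_eq_right (by linarith), max_eq_left (by linarith)]; constructor <;> linarith
  · rw [max_eq_left (by linarith), max_eq_left (by linarith)]; constructor <;> linarith

lemma tent_le_three {β : ℝ} (hβ : 0 ≤ β) {x : E d} (hx : x ∈ XX d) : |tent d β x| ≤ 3 := by
  have h := (XX_coord_bound hx).1
  rw [abs_of_nonneg (tent_nonneg β x)]
  unfold tent
  rcases le_total (x 0 - β) 0 with h2 | h2
  · rw [max_eq_right h2]; norm_num
  · rw [max_eq_left h2]; linarith [h.2]

/-! ## measurability of boxes and slabs -/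

lemma measurableSet_box {I J : Set ℝ} (hI : MeasurableSet I) (hJ : MeasurableSet J) :
    MeasurableSet (box d I J) := by
  have : box d I J = (⋂ (i : Fin d), (fun x : E d => x i) ⁻¹' (if i = 0 then I else J)) := by
    ext x; simpa [Set.mem_iInter] using mem_box_iff_pi I J x
  rw [this]
  refine MeasurableSet.iInter fun i => ?_
  exact (EuclideanSpace.proj i).continuous.measurable (by split <;> assumption)

def Slab (d : ℕ) [NeZero d] (n : ℕ) : Set (E d) :=
  {x : E d | aa n + bb n ≤ x 0 ∧ x 0 ≤ aa (n+1)}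

lemma measurableSet_Slab (n : ℕ) : MeasurableSet (Slab d n) := by
  have : Slab d n = (fun x : E d => x 0) ⁻¹' (Icc (aa n + bb n) (aa (n+1))) := rfl
  rw [this]
  exact (EuclideanSpace.proj (0:Fin d)).continuous.measurable measurableSet_Icc

/-! ## measure estimates -/

lemma rho_compl_zero (f : E d → ℝ) (hout : ∀ x ∉ XX d, f x = 0) :
    (volume.withDensity fun x => ENNReal.ofReal (f x)) ((XX d)ᶜ) = 0 := by
  rw [withDensity_apply _ (isOpen_XX.measurableSet.compl),
    ← lintegral_indicator isOpen_XX.measurableSet.compl]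
  have : ∀ x, ((XX d)ᶜ).indicator (fun x => ENNReal.ofReal (f x)) x = 0 := by
    intro x
    by_cases hx : x ∈ (XX d)ᶜ
    · rw [Set.indicator_of_mem hx, hout x hx, ENNReal.ofReal_zero]
    · rw [Set.indicator_of_notMem hx]
  rw [lintegral_congr this, lintegral_zero]

lemma ae_mem_XX (f : E d → ℝ) (hout : ∀ x ∉ XX d, f x = 0) :
    ∀ᵐ x ∂(volume.withDensity fun x => ENNReal.ofReal (f x)), x ∈ XX d := by
  rw [MeasureTheory.ae_iff]
  exact rho_compl_zero f hout

lemma rho_slab_le (f : E d → ℝ) (M : ℝ) (hub : ∀ x ∈ XX d, f x ≤ M)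
    (hout : ∀ x ∉ XX d, f x = 0) (n : ℕ) :
    (volume.withDensity fun x => ENNReal.ofReal (f x)) (Slab d n) ≤
      ENNReal.ofReal M * (ENNReal.ofReal (bb n) * ENNReal.ofReal (2 * ww n) ^ (d-1)) := by
  set T : Set (E d) := box d (Icc (aa n + bb n) (aa (n+1))) (Icc (-(ww n)) (ww n)) with hT
  have hTmeas : MeasurableSet T := measurableSet_box measurableSet_Icc measurableSet_Icc
  have step1 : (volume.withDensity fun x => ENNReal.ofReal (f x)) (Slab d n) =
      ∫⁻ x, (Slab d n).indicator (fun x => ENNReal.ofReal (f x)) x ∂volume := by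
    rw [withDensity_apply _ (measurableSet_Slab n), ← lintegral_indicator (measurableSet_Slab n)]
  rw [step1]
  have step2 : ∀ x, (Slab d n).indicator (fun x => ENNReal.ofReal (f x)) x ≤
      T.indicator (fun _ => ENNReal.ofReal M) x := by
    intro x
    by_cases hx : x ∈ Slab d n
    · rw [Set.indicator_of_mem hx]
      by_cases hxX : x ∈ XX d
      · have hxT : x ∈ T := by
          refine ⟨hx, fun i hi => ?_⟩
          have := slab_subset n hxX hx.1 hx.2 i hi
          rw [abs_le] at this
          exact ⟨by linarith [this.1], this.2⟩
        rw [Set.indicator_of_mem hxT]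
        exact ENNReal.ofReal_le_ofReal (hub x hxX)
      · rw [hout x hxX, ENNReal.ofReal_zero]
        exact bot_le
    · rw [Set.indicator_of_notMem hx]
      exact bot_le
  calc ∫⁻ x, (Slab d n).indicator (fun x => ENNReal.ofReal (f x)) x ∂volume
      ≤ ∫⁻ x, T.indicator (fun _ => ENNReal.ofReal M) x ∂volume := lintegral_mono step2
    _ = ENNReal.ofReal M * volume T := lintegral_indicator_const hTmeas _
    _ = ENNReal.ofReal M * (ENNReal.ofReal (bb n) * ENNReal.ofReal (2 * ww n) ^ (d-1)) := by
        rw [hT, volume_box, Real.volume_Icc, Real.volume_Icc]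
        congr 2
        · rw [aa_succ]; ring
        · ring

lemma rho_bulb_ge (f : E d → ℝ) (m : ℝ) (hlb : ∀ x ∈ XX d, m ≤ f x) (n : ℕ) :
    ENNReal.ofReal m * (ENNReal.ofReal (bb n) * ENNReal.ofReal (bb n) ^ (d-1)) ≤
      (volume.withDensity fun x => ENNReal.ofReal (f x)) (Bulb d n) := by
  have hBmeas : MeasurableSet (Bulb d n) :=
    (isOpen_box _ _ isOpen_Ioo isOpen_Ioo).measurableSet
  have step1 : (volume.withDensity fun x => ENNReal.ofReal (f x)) (Bulb d n) =
      ∫⁻ x, (Bulb d n).indicator (fun x => ENNReal.ofReal (f x)) x ∂volume := by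
    rw [withDensity_apply _ hBmeas, ← lintegral_indicator hBmeas]
  rw [step1]
  have step2 : ∀ x, (Bulb d n).indicator (fun _ => ENNReal.ofReal m) x ≤
      (Bulb d n).indicator (fun x => ENNReal.ofReal (f x)) x := by
    intro x
    by_cases hx : x ∈ Bulb d n
    · rw [Set.indicator_of_mem hx, Set.indicator_of_mem hx]
      exact ENNReal.ofReal_le_ofReal (hlb x (Bulb_subset n hx))
    · rw [Set.indicator_of_notMem hx, Set.indicator_of_notMem hx]
  calc ENNReal.ofReal m * (ENNReal.ofReal (bb n) * ENNReal.ofReal (bb n) ^ (d-1))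
      = ENNReal.ofReal m * volume (Bulb d n) := by
        rw [Bulb, volume_box, Real.volume_Ioo, Real.volume_Ioo]
        congr 3
        · ring
        · ring
    _ = ∫⁻ x, (Bulb d n).indicator (fun _ => ENNReal.ofReal m) x ∂volume :=
        (lintegral_indicator_const hBmeas _).symm
    _ ≤ _ := lintegral_mono step2

/-! ## numeric lemma -/

lemma exists_nat_quadratic (a b c : ℝ) (ha : 0 < a) :
    ∃ n : ℕ, 1 ≤ n ∧ b * n + c < a * (n:ℝ)^2 := by
  obtain ⟨k, hk⟩ := exists_nat_gt ((|b| + |c| + 1)/a)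
  refine ⟨max k 1, le_max_right _ _, ?_⟩
  set N : ℝ := ((max k 1 : ℕ) : ℝ) with hN
  have hN1 : (1:ℝ) ≤ N := by
    rw [hN]; exact_mod_cast Nat.one_le_iff_ne_zero.mpr (by positivity)
  have hNk : (k:ℝ) ≤ N := by rw [hN]; exact_mod_cast le_max_left k 1
  have h1 : (|b| + |c| + 1)/a < N := lt_of_lt_of_le hk hNk
  have h2 : |b| + |c| + 1 < a * N := by
    rw [div_lt_iff₀ ha] at h1; linarith [h1]
  have h3 : (a * N - (|b| + |c| + 1)) * N ≥ 0 :=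
    mul_nonneg (by linarith) (by linarith)
  have h4 : (|b| - b) * N ≥ 0 := mul_nonneg (by linarith [le_abs_self b]) (by linarith)
  have h5 : |c| * (N - 1) ≥ 0 := mul_nonneg (abs_nonneg c) (by linarith)
  nlinarith [le_abs_self c]

lemma log4 : Real.log 4 = 2 * Real.log 2 := by
  rw [show (4:ℝ) = 2^2 by norm_num, Real.log_pow]
  push_cast; ring

lemma log_bb (n : ℕ) : Real.log (bb n) = -(2 * n * Real.log 2) := by
  unfold bb
  rw [Real.log_pow, Real.log_inv, log4]
  push_cast; ring

lemma log_two_ww (n : ℕ) : Real.log (2 * ww n) = -(((n:ℝ)+1)^2 * Real.log 2) := by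
  have h : 2 * ww n = (2:ℝ)⁻¹ ^ ((n+1)^2) := by unfold ww; ring
  rw [h, Real.log_pow, Real.log_inv]
  push_cast; ring

set_option maxHeartbeats 1000000 in
lemma numeric (d : ℕ) (hd : 2 ≤ d) (C q p m M : ℝ) (hC : 0 < C) (hq : 0 < q)
    (hp : 1 ≤ p) (hm : 0 < m) (hM : m ≤ M) :
    ∃ n : ℕ, 1 ≤ n ∧
      C * (2 * (M * (bb n * (2 * ww n)^(d-1))) ^ (1/p)) ^ q <
        Real.sqrt ((bb n / 2)^2 * (m * bb (n+1) ^ d)) := by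
  have hp0 : 0 < p := lt_of_lt_of_le one_pos hp
  have hpne : p ≠ 0 := ne_of_gt hp0
  have hM0 : 0 < M := lt_of_lt_of_le hm hM
  have hL : 0 < Real.log 2 := Real.log_pos (by norm_num)
  set L := Real.log 2 with hLdef
  have hs : 0 < q / p := div_pos hq hp0
  obtain ⟨n, hn1, hkey⟩ := exists_nat_quadratic (2*(q/p)*L)
      (4*L + 2*(d:ℝ)*L)
      (2*Real.log C + 2*q*L + 2*(q/p)*Real.log M + 2*L - Real.log m + 2*(d:ℝ)*L)
      (by positivity)
  refine ⟨n, hn1, ?_⟩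
  set N : ℝ := (n:ℝ) with hNdef
  have hbbn : 0 < bb n := bb_pos n
  have hbbn1 : 0 < bb (n+1) := bb_pos (n+1)
  have hwwn : 0 < 2 * ww n := by linarith [ww_pos n]
  have hVpos : 0 < M * (bb n * (2 * ww n)^(d-1)) := by positivity
  set V : ℝ := M * (bb n * (2 * ww n)^(d-1)) with hVdef
  have hLHS : 0 ≤ C * (2 * V ^ (1/p)) ^ q := by positivity
  rw [Real.lt_sqrt hLHS]
  have hX : (0:ℝ) < (C * (2 * V ^ (1/p)) ^ q)^2 := by positivity
  have hY : (0:ℝ) < (bb n / 2)^2 * (m * bb (n+1) ^ d) := by positivity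
  rw [← Real.log_lt_log_iff hX hY]
  have e1 : Real.log ((C * (2 * V ^ (1/p)) ^ q)^2)
      = 2 * (Real.log C + q * (L + (1/p) * Real.log V)) := by
    rw [Real.log_pow]
    rw [Real.log_mul (ne_of_gt hC) (by positivity)]
    rw [Real.log_rpow (by positivity)]
    rw [Real.log_mul (by norm_num) (by positivity)]
    rw [Real.log_rpow hVpos]
    push_cast; ring
  have e2 : Real.log V = Real.log M + (-(2*N*L) + ((d:ℝ)-1) * (-((N+1)^2 * L))) := by
    rw [hVdef, Real.log_mul (ne_of_gt hM0) (by positivity),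
      Real.log_mul (ne_of_gt hbbn) (by positivity), Real.log_pow, log_bb, log_two_ww,
      Nat.cast_sub (by omega : 1 ≤ d)]
    push_cast; ring
  have e3 : Real.log ((bb n / 2)^2 * (m * bb (n+1) ^ d))
      = 2*(-(2*N*L) - L) + Real.log m + (d:ℝ) * (-(2*(N+1)*L)) := by
    rw [Real.log_mul (by positivity) (by positivity),
      Real.log_mul (ne_of_gt hm) (by positivity),
      Real.log_pow, Real.log_pow,
      Real.log_div (ne_of_gt hbbn) (by norm_num), log_bb, log_bb]
    push_cast; ring
  rw [e1, e2, e3]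
  have hexp : 2 * (Real.log C + q * (L + (1/p) * (Real.log M + (-(2*N*L) + ((d:ℝ)-1) * (-((N+1)^2 * L))))))
      = 2*Real.log C + 2*q*L + 2*(q/p)*Real.log M - 4*(q/p)*N*L
        - 2*(q/p)*(((d:ℝ)-1)*((N+1)^2*L)) := by
    field_simp
    ring
  have hexp2 : 2*(-(2*N*L) - L) + Real.log m + (d:ℝ)*(-(2*(N+1)*L))
      = -(4*N*L) - 2*L + Real.log m - 2*(d:ℝ)*N*L - 2*(d:ℝ)*L := by ring
  rw [hexp, hexp2]
  have hd1 : (1:ℝ) ≤ (d:ℝ) - 1 := by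
    have : (2:ℝ) ≤ (d:ℝ) := by exact_mod_cast hd
    linarith
  have hN0 : 0 ≤ N := Nat.cast_nonneg n
  have hsq : N^2 ≤ (N+1)^2 := by nlinarith
  have k1 : (q/p)*L*N^2 ≤ (q/p)*L*(N+1)^2 :=
    mul_le_mul_of_nonneg_left hsq (by positivity)
  have k2 : (q/p)*L*(N+1)^2 ≤ ((d:ℝ)-1)*((q/p)*L*(N+1)^2) :=
    le_mul_of_one_le_left (by positivity) hd1
  have hdrop : 2*(q/p)*L*N^2 ≤ 2*(q/p)*(((d:ℝ)-1)*((N+1)^2*L)) := by nlinarith [k1, k2]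
  have hsN : 0 ≤ 4*(q/p)*N*L := by positivity
  linarith [hkey, hdrop, hsN]

end NH

/-- The p-Wasserstein distance between two probability measures on `ℝ^d`. -/
def Wp {d : ℕ} (p : ℝ) (μ ν : Measure (EuclideanSpace ℝ (Fin d))) : ℝ :=
  sInf { r : ℝ | ∃ γ : Measure (EuclideanSpace ℝ (Fin d) × EuclideanSpace ℝ (Fin d)),
    IsProbabilityMeasure γ ∧ γ.map Prod.fst = μ ∧ γ.map Prod.snd = ν ∧
    r = (∫ q, dist q.1 q.2 ^ p ∂γ) ^ (1 / p) }

/-- `φ` is a Brenier potential for `(ρ, μ)`. -/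
def IsBrenierPotential {d : ℕ} (ρ μ : Measure (EuclideanSpace ℝ (Fin d)))
    (φ : EuclideanSpace ℝ (Fin d) → ℝ) : Prop :=
  ConvexOn ℝ Set.univ φ ∧ (∃ L : ℝ≥0, LipschitzWith L φ) ∧
  (∫ x, φ x ∂ρ) = 0 ∧ Measure.map (fun x => gradient φ x) ρ = μ

open NH in
set_option maxHeartbeats 1000000 in
theorem no_holder_potential_stability
    (d : ℕ) (hd : 2 ≤ d) :
    ∃ X : Set (EuclideanSpace ℝ (Fin d)),
      X.Nonempty ∧ Bornology.IsBounded X ∧ IsPathConnected X ∧ IsOpen X ∧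
      ∀ (ρ : Measure (EuclideanSpace ℝ (Fin d))) (f : EuclideanSpace ℝ (Fin d) → ℝ)
        (m M : ℝ), 0 < m →
        ρ = volume.withDensity (fun x => ENNReal.ofReal (f x)) →
        IsProbabilityMeasure ρ →
        (∀ x ∈ X, m ≤ f x ∧ f x ≤ M) → (∀ x ∉ X, f x = 0) →
        ∀ C : ℝ, 0 < C → ∀ q : ℝ, 0 < q → ∀ p : ℝ, 1 ≤ p →
          ∃ (μ ν : Measure (EuclideanSpace ℝ (Fin d)))
            (φμ φν : EuclideanSpace ℝ (Fin d) → ℝ),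
            IsProbabilityMeasure μ ∧ IsProbabilityMeasure ν ∧
            μ (Metric.closedBall (0 : EuclideanSpace ℝ (Fin d)) 1)ᶜ = 0 ∧
            ν (Metric.closedBall (0 : EuclideanSpace ℝ (Fin d)) 1)ᶜ = 0 ∧
            IsBrenierPotential ρ μ φμ ∧ IsBrenierPotential ρ ν φν ∧
            C * Wp p μ ν ^ q < Real.sqrt (∫ x, (φμ x - φν x) ^ 2 ∂ρ) := by
  haveI : NeZero d := ⟨by omega⟩
  refine ⟨XX d, nonempty_XX, isBounded_XX, isPathConnected_XX, isOpen_XX, ?_⟩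
  intro ρ f m M hm hρdef hρprob hmM hout C hC q hq p hp
  haveI := hρprob
  have hp0 : 0 < p := lt_of_lt_of_le one_pos hp
  have hpne : p ≠ 0 := ne_of_gt hp0
  obtain ⟨x₀, hx₀⟩ := nonempty_XX (d := d)
  have hmM' : m ≤ M := le_trans (hmM x₀ hx₀).1 (hmM x₀ hx₀).2
  obtain ⟨n, hn1, hnum⟩ := numeric d hd C q p m M hC hq hp hm hmM'
  set α : ℝ := aa n + bb n with hαdef
  set β : ℝ := aa (n+1) with hβdef
  have hαβ : α ≤ β := aa_add_bb_le n
  have hτ : β - α = bb n := by rw [hβdef, hαdef, aa_succ]; ring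
  have hτpos : 0 < bb n := bb_pos n
  have hα1 : 1 ≤ α := by
    have h1 : aa 1 ≤ aa n := aa_mono hn1
    have h2 : aa 1 = 2 := by norm_num [aa]
    rw [hαdef]; linarith [bb_pos n]
  have hα0 : 0 ≤ α := by linarith
  have hβ0 : 0 ≤ β := le_trans hα0 hαβ
  -- potentials
  have haeX := ae_mem_XX f hout
  rw [← hρdef] at haeX
  have hint1 : Integrable (tent d β) ρ := by
    refine Integrable.mono' (integrable_const (3:ℝ))
      (tent_continuous β).aestronglyMeasurable ?_
    filter_upwards [haeX] with x hx
    rw [Real.norm_eq_abs]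
    exact tent_le_three hβ0 hx
  have hint2 : Integrable (tent d α) ρ := by
    refine Integrable.mono' (integrable_const (3:ℝ))
      (tent_continuous α).aestronglyMeasurable ?_
    filter_upwards [haeX] with x hx
    rw [Real.norm_eq_abs]
    exact tent_le_three hα0 hx
  set c1 : ℝ := ∫ x, tent d β x ∂ρ with hc1
  set c2 : ℝ := ∫ x, tent d α x ∂ρ with hc2
  set φμ : E d → ℝ := fun x => tent d β x - c1 with hφμ
  set φν : E d → ℝ := fun x => tent d α x - c2 with hφν
  set g1 : E d → E d := fun x => gradient φμ x with hg1def
  set g2 : E d → E d := fun x => gradient φν x with hg2def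
  have hg1 : ∀ x, g1 x = gradient (tent d β) x := fun x => gradient_sub_const _ _ x
  have hg2 : ∀ x, g2 x = gradient (tent d α) x := fun x => gradient_sub_const _ _ x
  have hg1meas : Measurable g1 := measurable_gradient' φμ
  have hg2meas : Measurable g2 := measurable_gradient' φν
  have hnorm1 : ∀ x, ‖g1 x‖ ≤ 1 := fun x => by rw [hg1 x]; exact gradient_tent_norm_le β x
  have hnorm2 : ∀ x, ‖g2 x‖ ≤ 1 := fun x => by rw [hg2 x]; exact gradient_tent_norm_le α x
  set μ : Measure (E d) := ρ.map g1 with hμdef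
  set ν : Measure (E d) := ρ.map g2 with hνdef
  haveI hμprob : IsProbabilityMeasure μ := Measure.isProbabilityMeasure_map hg1meas.aemeasurable
  haveI hνprob : IsProbabilityMeasure ν := Measure.isProbabilityMeasure_map hg2meas.aemeasurable
  have hball : ∀ (g : E d → E d), Measurable g → (∀ x, ‖g x‖ ≤ 1) →
      (ρ.map g) (Metric.closedBall (0 : E d) 1)ᶜ = 0 := by
    intro g hgm hgn
    rw [Measure.map_apply hgm measurableSet_closedBall.compl]
    have : g ⁻¹' (Metric.closedBall (0 : E d) 1)ᶜ = ∅ := by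
      rw [Set.eq_empty_iff_forall_notMem]
      intro x hx
      exact hx (Metric.mem_closedBall.mpr (by rw [dist_zero_right]; exact hgn x))
    rw [this, measure_empty]
  -- Lipschitz for φμ φν
  have hlip : ∀ (c β' : ℝ), LipschitzWith 1 (fun x : E d => tent d β' x - c) := by
    intro c β'
    refine LipschitzWith.of_dist_le_mul fun x y => ?_
    have := (tent_lipschitz β' (d := d)).dist_le_mul x y
    calc dist (tent d β' x - c) (tent d β' y - c) = dist (tent d β' x) (tent d β' y) := by
          rw [Real.dist_eq, Real.dist_eq]; congr 1; ring
      _ ≤ 1 * dist x y := by simpa using this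
  -- Brenier potential facts
  have hbren1 : IsBrenierPotential ρ μ φμ := by
    refine ⟨(tent_convex β).sub (concaveOn_const c1 convex_univ), ⟨1, hlip c1 β⟩, ?_, rfl⟩
    rw [hφμ]
    rw [integral_sub hint1 (integrable_const c1), integral_const]
    simp [measure_univ, hc1]
  have hbren2 : IsBrenierPotential ρ ν φν := by
    refine ⟨(tent_convex α).sub (concaveOn_const c2 convex_univ), ⟨1, hlip c2 α⟩, ?_, rfl⟩
    rw [hφν]
    rw [integral_sub hint2 (integrable_const c2), integral_const]
    simp [measure_univ, hc2]
  refine ⟨μ, ν, φμ, φν, hμprob, hνprob, hball g1 hg1meas hnorm1, hball g2 hg2meas hnorm2,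
    hbren1, hbren2, ?_⟩
  -- ## Wasserstein upper bound
  set D : ℝ := M * (bb n * (2 * ww n)^(d-1)) with hDdef
  have hwwn : 0 < ww n := ww_pos n
  have hM0 : 0 < M := lt_of_lt_of_le hm hmM'
  have hD0 : 0 < D := by rw [hDdef]; positivity
  set γ : Measure (E d × E d) := ρ.map (fun x => (g1 x, g2 x)) with hγdef
  have hpair : Measurable (fun x : E d => (g1 x, g2 x)) := hg1meas.prodMk hg2meas
  haveI hγprob : IsProbabilityMeasure γ := Measure.isProbabilityMeasure_map hpair.aemeasurable
  have hfst : γ.map Prod.fst = μ := by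
    rw [hγdef, Measure.map_map measurable_fst hpair]; rfl
  have hsnd : γ.map Prod.snd = ν := by
    rw [hγdef, Measure.map_map measurable_snd hpair]; rfl
  set r₀ : ℝ := (∫ z : E d × E d, dist z.1 z.2 ^ p ∂γ) ^ (1/p) with hr₀def
  have hbddS : ∀ r ∈ { r : ℝ | ∃ γ : Measure (EuclideanSpace ℝ (Fin d) × EuclideanSpace ℝ (Fin d)),
      IsProbabilityMeasure γ ∧ γ.map Prod.fst = μ ∧ γ.map Prod.snd = ν ∧
      r = (∫ z, dist z.1 z.2 ^ p ∂γ) ^ (1 / p) }, (0:ℝ) ≤ r := by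
    rintro r ⟨γ', -, -, -, rfl⟩
    exact Real.rpow_nonneg (integral_nonneg fun z => Real.rpow_nonneg dist_nonneg p) _
  have hWle : Wp p μ ν ≤ r₀ := by
    apply csInf_le ⟨0, hbddS⟩
    exact ⟨γ, hγprob, hfst, hsnd, by rw [hr₀def, one_div]⟩
  have hW0 : 0 ≤ Wp p μ ν := Real.sInf_nonneg hbddS
  -- pointwise localization of gradient difference
  have hgval : ∀ x : E d, x ∉ Slab d n → g1 x = g2 x := by
    intro x hx
    have hx' : ¬ (α ≤ x 0 ∧ x 0 ≤ β) := hx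
    push_neg at hx'
    rcases lt_or_ge (x 0) α with h | h
    · rw [hg1 x, hg2 x, gradient_tent_lt (lt_of_lt_of_le h hαβ), gradient_tent_lt h]
    · have hβx : β < x 0 := hx' h
      rw [hg1 x, hg2 x, gradient_tent_gt hβx, gradient_tent_gt (lt_of_le_of_lt hαβ hβx)]
  have hp0' : (0:ℝ) ≤ p := le_of_lt hp0
  have hdistle : ∀ x : E d, dist (g1 x) (g2 x) ^ p ≤
      (Slab d n).indicator (fun _ => (2:ℝ)^p) x := by
    intro x
    by_cases hx : x ∈ Slab d n
    · rw [Set.indicator_of_mem hx]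
      have h2 : dist (g1 x) (g2 x) ≤ 2 := by
        calc dist (g1 x) (g2 x) ≤ ‖g1 x‖ + ‖g2 x‖ := dist_le_norm_add_norm _ _
          _ ≤ 2 := by linarith [hnorm1 x, hnorm2 x]
      exact Real.rpow_le_rpow dist_nonneg h2 hp0'
    · rw [Set.indicator_of_notMem hx, hgval x hx, dist_self, Real.zero_rpow hpne]
  have hcont_rpow : Continuous (fun t : ℝ => t ^ p) := Real.continuous_rpow_const hp0'
  have hint_dist : Integrable (fun x => dist (g1 x) (g2 x) ^ p) ρ := by
    refine Integrable.mono' (integrable_const ((2:ℝ)^p))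
      (hcont_rpow.measurable.comp (hg1meas.dist hg2meas)).aestronglyMeasurable
      (Filter.Eventually.of_forall fun x => ?_)
    rw [Real.norm_eq_abs, abs_of_nonneg (Real.rpow_nonneg dist_nonneg p)]
    refine Real.rpow_le_rpow dist_nonneg ?_ hp0'
    calc dist (g1 x) (g2 x) ≤ ‖g1 x‖ + ‖g2 x‖ := dist_le_norm_add_norm _ _
      _ ≤ 2 := by linarith [hnorm1 x, hnorm2 x]
  have hslabmeas := measurableSet_Slab (d := d) n
  have hi1 : ∫ x, dist (g1 x) (g2 x) ^ p ∂ρ ≤ (2:ℝ)^p * (ρ (Slab d n)).toReal := by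
    calc ∫ x, dist (g1 x) (g2 x) ^ p ∂ρ
        ≤ ∫ x, (Slab d n).indicator (fun _ => (2:ℝ)^p) x ∂ρ :=
          integral_mono hint_dist ((integrable_const _).indicator hslabmeas) hdistle
      _ = (ρ (Slab d n)).toReal • (2:ℝ)^p := integral_indicator_const _ hslabmeas
      _ = (2:ℝ)^p * (ρ (Slab d n)).toReal := by rw [smul_eq_mul]; ring
  have hρslab : (ρ (Slab d n)).toReal ≤ D := by
    have h := rho_slab_le f M (fun x hx => (hmM x hx).2) hout n
    rw [← hρdef] at h
    have he : ENNReal.ofReal M * (ENNReal.ofReal (bb n) * ENNReal.ofReal (2 * ww n) ^ (d-1))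
        = ENNReal.ofReal D := by
      rw [hDdef, ← ENNReal.ofReal_pow (by linarith), ← ENNReal.ofReal_mul (le_of_lt hτpos),
        ← ENNReal.ofReal_mul (le_of_lt hM0)]
    rw [he] at h
    calc (ρ (Slab d n)).toReal ≤ (ENNReal.ofReal D).toReal :=
          ENNReal.toReal_mono ENNReal.ofReal_ne_top h
      _ = D := ENNReal.toReal_ofReal (le_of_lt hD0)
  have hγint : ∫ z : E d × E d, dist z.1 z.2 ^ p ∂γ = ∫ x, dist (g1 x) (g2 x) ^ p ∂ρ := by
    rw [hγdef]
    exact integral_map hpair.aemeasurable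
      ((hcont_rpow.comp (continuous_fst.dist continuous_snd)).aestronglyMeasurable)
  have hr₀le : r₀ ≤ 2 * D ^ (1/p) := by
    have hint_le : ∫ z : E d × E d, dist z.1 z.2 ^ p ∂γ ≤ (2:ℝ)^p * D := by
      rw [hγint]
      calc ∫ x, dist (g1 x) (g2 x) ^ p ∂ρ ≤ (2:ℝ)^p * (ρ (Slab d n)).toReal := hi1
        _ ≤ (2:ℝ)^p * D := by
            have h2p : (0:ℝ) ≤ (2:ℝ)^p := Real.rpow_nonneg (by norm_num) p
            exact mul_le_mul_of_nonneg_left hρslab h2p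
    have hint_nonneg : 0 ≤ ∫ z : E d × E d, dist z.1 z.2 ^ p ∂γ :=
      integral_nonneg fun z => Real.rpow_nonneg dist_nonneg p
    calc r₀ ≤ ((2:ℝ)^p * D) ^ (1/p) :=
          Real.rpow_le_rpow hint_nonneg hint_le (by positivity)
      _ = 2 * D ^ (1/p) := by
          rw [Real.mul_rpow (Real.rpow_nonneg (by norm_num) p) (le_of_lt hD0)]
          congr 1
          rw [← Real.rpow_mul (by norm_num : (0:ℝ) ≤ 2), mul_one_div_cancel hpne,
            Real.rpow_one]
  -- ## variance lower bound
  have hbn1 : 0 < bb (n+1) := bb_pos (n+1)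
  set c : ℝ := c1 - c2 with hcdef
  have hφdiff : ∀ x, φμ x - φν x = (tent d β x - tent d α x) - c := by
    intro x; rw [hφμ, hφν, hcdef]; ring
  have hgg_int : Integrable (fun x => tent d β x - tent d α x) ρ := hint1.sub hint2
  have hceq : c = ∫ x, (tent d β x - tent d α x) ∂ρ := by
    rw [hcdef, hc1, hc2, integral_sub hint1 hint2]
  have hcle : c ≤ 0 := by
    rw [hceq]
    calc ∫ x, (tent d β x - tent d α x) ∂ρ ≤ ∫ _x, (0:ℝ) ∂ρ :=
        integral_mono hgg_int (integrable_const 0) (fun x => (tent_diff_bounds hαβ x).2)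
      _ = 0 := by simp
  have hcge : -bb n ≤ c := by
    rw [hceq]
    have : ∫ _x, (α - β : ℝ) ∂ρ ≤ ∫ x, (tent d β x - tent d α x) ∂ρ :=
      integral_mono (integrable_const _) hgg_int (fun x => (tent_diff_bounds hαβ x).1)
    rw [integral_const] at this
    simp only [probReal_univ, one_smul] at this
    linarith [hτ]
  have hsq_cont : Continuous (fun x : E d => (φμ x - φν x)^2) := by
    apply Continuous.pow
    rw [hφμ, hφν]
    exact (((tent_continuous β).sub continuous_const).sub
      ((tent_continuous α).sub continuous_const))
  have hsq_int : Integrable (fun x => (φμ x - φν x)^2) ρ := by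
    refine Integrable.mono' (integrable_const ((2*bb n)^2))
      hsq_cont.aestronglyMeasurable (Filter.Eventually.of_forall fun x => ?_)
    rw [Real.norm_eq_abs, abs_of_nonneg (sq_nonneg _), hφdiff x]
    have hb := tent_diff_bounds hαβ x
    have h1 : α - β = -bb n := by linarith [hτ]
    nlinarith [hb.1, hb.2, hcle, hcge, hτpos]
  have hbulb_meas : ∀ j, MeasurableSet (Bulb d j) := fun j =>
    (isOpen_box _ _ isOpen_Ioo isOpen_Ioo).measurableSet
  have hbulb_lb : ∀ j, ENNReal.ofReal (m * bb j ^ d) ≤ ρ (Bulb d j) := by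
    intro j
    have h := rho_bulb_ge f m (fun x hx => (hmM x hx).1) j
    rw [← hρdef] at h
    have he : ENNReal.ofReal m * (ENNReal.ofReal (bb j) * ENNReal.ofReal (bb j) ^ (d-1))
        = ENNReal.ofReal (m * bb j ^ d) := by
      rw [← ENNReal.ofReal_pow (le_of_lt (bb_pos j)),
        ← ENNReal.ofReal_mul (le_of_lt (bb_pos j)),
        ← ENNReal.ofReal_mul (le_of_lt hm)]
      congr 2
      rw [← pow_succ']
      congr 1
      omega
    rw [← he]
    exact h
  have hvar : (bb n/2)^2 * (m * bb (n+1) ^ d) ≤ ∫ x, (φμ x - φν x)^2 ∂ρ := by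
    have key : ∀ (j : ℕ), (∀ x ∈ Bulb d j, (bb n/2)^2 ≤ (φμ x - φν x)^2) →
        ENNReal.ofReal (m * bb (n+1) ^ d) ≤ ρ (Bulb d j) →
        (bb n/2)^2 * (m * bb (n+1) ^ d) ≤ ∫ x, (φμ x - φν x)^2 ∂ρ := by
      intro j hval hmass
      have hptwise : ∀ x, (Bulb d j).indicator (fun _ => (bb n/2)^2) x ≤ (φμ x - φν x)^2 := by
        intro x
        by_cases hx : x ∈ Bulb d j
        · rw [Set.indicator_of_mem hx]; exact hval x hx
        · rw [Set.indicator_of_notMem hx]; exact sq_nonneg _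
      have hstep : ∫ x, (Bulb d j).indicator (fun _ => (bb n/2)^2) x ∂ρ ≤
          ∫ x, (φμ x - φν x)^2 ∂ρ :=
        integral_mono ((integrable_const _).indicator (hbulb_meas j)) hsq_int hptwise
      rw [integral_indicator_const _ (hbulb_meas j)] at hstep
      have hρB : m * bb (n+1) ^ d ≤ (ρ (Bulb d j)).toReal := by
        calc m * bb (n+1) ^ d = (ENNReal.ofReal (m * bb (n+1) ^ d)).toReal := by
              rw [ENNReal.toReal_ofReal (by positivity)]
          _ ≤ (ρ (Bulb d j)).toReal := ENNReal.toReal_mono (measure_ne_top ρ _) hmass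
      calc (bb n/2)^2 * (m * bb (n+1) ^ d) ≤ (bb n/2)^2 * (ρ (Bulb d j)).toReal := by
            have := sq_nonneg (bb n/2)
            exact mul_le_mul_of_nonneg_left hρB this
        _ = (ρ (Bulb d j)).toReal • (bb n/2)^2 := by rw [smul_eq_mul]; ring
        _ ≤ ∫ x, (φμ x - φν x)^2 ∂ρ := hstep
    rcases le_or_gt (-(bb n/2)) c with hcase | hcase
    · -- c is small in magnitude: use the far bulb, where the difference is -t - c
      refine key (n+1) (fun x hx => ?_) (hbulb_lb (n+1))
      have hx0 : β ≤ x 0 := le_of_lt hx.1.1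
      rw [hφdiff x, tent_diff_right hαβ hx0]
      have h1 : α - β = -bb n := by linarith [hτ]
      rw [h1]
      nlinarith [hcle, hτpos]
    · -- c is large in magnitude: use bulb 0, where the difference is -c
      refine key 0 (fun x hx => ?_) ?_
      · have hx0 : x 0 ≤ α := by
          have := hx.1.2
          rw [aa0, bb0] at this
          linarith
        rw [hφdiff x, tent_diff_left hαβ hx0]
        nlinarith [hcge, hτpos]
      · refine le_trans (ENNReal.ofReal_le_ofReal ?_) (hbulb_lb 0)
        rw [bb0, one_pow]
        have h1 : bb (n+1) ^ d ≤ 1 := pow_le_one₀ (le_of_lt (bb_pos (n+1))) (bb_le_one (n+1))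
        nlinarith [hm]
  -- ## conclusion
  have hRHS : Real.sqrt ((bb n / 2)^2 * (m * bb (n+1) ^ d)) ≤
      Real.sqrt (∫ x, (φμ x - φν x)^2 ∂ρ) := by
    apply Real.sqrt_le_sqrt
    exact hvar
  have hr₀0 : 0 ≤ r₀ :=
    Real.rpow_nonneg (integral_nonneg fun z => Real.rpow_nonneg dist_nonneg p) _
  calc C * Wp p μ ν ^ q ≤ C * (2 * D ^ (1/p)) ^ q := by
        apply mul_le_mul_of_nonneg_left _ (le_of_lt hC)
        exact Real.rpow_le_rpow hW0 (le_trans hWle hr₀le) (le_of_lt hq)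
    _ < Real.sqrt ((bb n / 2)^2 * (m * bb (n+1) ^ d)) := hnum
    _ ≤ Real.sqrt (∫ x, (φμ x - φν x)^2 ∂ρ) := hRHS
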